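/- Let v₁ = (0,0,0), v₂ = (10000,0,0), v₃ = (3086,7225,0), v₄ = (3093,−2773,−206), v₅ = (6857,5129,4632), v₆ = (−2809,2567,4514), v₇ = (5157,6374,−183), v₈ = (−4789,6789,767), v₉ = (3281,2871,5184), v₁₀ = (9811,242,−1919) in ℝ³, and define edge vectors eᵢ = v_{i+1} − vᵢ for i = 1, …, 9 and e₁₀ = v₁ − v₁₀. Then there is no w ∈ ℝ³ such that (−1)^{i+1} (w · eᵢ) > 0 for every i ∈ {1, …, 10}. -/
import Mathlib

/-- The vertices of the paper's 10-stick polygonal realization of the knot `8_8`.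
Here `vert8_8 i` is the paper's vertex `v_(i+1)`. -/
noncomputable def vert8_8 : Fin 10 → (Fin 3 → ℝ) :=
  ![![0, 0, 0], ![10000, 0, 0], ![3086, 7225, 0], ![3093, -2773, -206], ![6857, 5129, 4632], ![-2809, 2567, 4514], ![5157, 6374, -183], ![-4789, 6789, 767], ![3281, 2871, 5184], ![9811, 242, -1919]]

/-- The edge vectors `eᵢ = v_(i+1) − vᵢ` (cyclically, so `e₁₀ = v₁ − v₁₀`);
here `edge8_8 i` is the paper's `e_(i+1)`, using wrap-around addition on `Fin 10`. -/
noncomputable def edge8_8 (i : Fin 10) : Fin 3 → ℝ :=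
  vert8_8 (i + 1) - vert8_8 i

/-- There is no `w ∈ ℝ³` such that `(−1)^(i+1) (w · eᵢ) > 0` for every
`i ∈ {1, …, 10}`: no projection of this polygon (the knot `8_8`) to a line has
5 local maxima. (With 0-based indexing `i : Fin 10`, the sign is `(−1)^i`.) -/
theorem no_alternating_direction_8_8 :
    ¬ ∃ w : Fin 3 → ℝ, ∀ i : Fin 10,
        0 < (-1 : ℝ) ^ (i : ℕ) * ∑ j : Fin 3, w j * edge8_8 i j := by
  rintro ⟨w, h⟩
  have h0 := h 0
  have h1 := h 1
  have h5 := h 5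
  have h7 := h 7
  have e0 : edge8_8 0 = ![10000, 0, 0] := by
    funext j
    fin_cases j <;>
      simp [edge8_8, show vert8_8 1 = ![10000, 0, 0] from rfl,
        show vert8_8 0 = ![0, 0, 0] from rfl]
  have e1 : edge8_8 1 = ![-6914, 7225, 0] := by
    funext j
    fin_cases j <;>
      simp [edge8_8, show vert8_8 2 = ![3086, 7225, 0] from rfl,
        show vert8_8 1 = ![10000, 0, 0] from rfl] <;> norm_num
  have e5 : edge8_8 5 = ![7966, 3807, -4697] := by
    funext j
    fin_cases j <;>
      simp [edge8_8, show (5 : Fin 10) + 1 = 6 from rfl,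
        show vert8_8 6 = ![5157, 6374, -183] from rfl,
        show vert8_8 5 = ![-2809, 2567, 4514] from rfl] <;> norm_num
  have e7 : edge8_8 7 = ![8070, -3918, 4417] := by
    funext j
    fin_cases j <;>
      simp [edge8_8, show (7 : Fin 10) + 1 = 8 from rfl,
        show vert8_8 8 = ![3281, 2871, 5184] from rfl,
        show vert8_8 7 = ![-4789, 6789, 767] from rfl] <;> norm_num
  rw [e0] at h0; rw [e1] at h1; rw [e5] at h5; rw [e7] at h7
  simp [Fin.sum_univ_three, show ((5 : Fin 10) : ℕ) = 5 from rfl,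
    show ((7 : Fin 10) : ℕ) = 7 from rfl] at h0 h1 h5 h7
  norm_num at h0 h1 h5 h7
  linarith
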